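/- The cardinality of M₂ is at most 39, and for every d ≥ 2 the cardinality of M_d is at most 3^(4·3^(d−2)) (equivalently, log₃|M_d| ≤ 4·3^(d−2)). -/

import Mathlib

open scoped Pointwise

/-- The recursively defined sets `M₁, M₂, …` of the free group (0-indexed: `Mset s`
corresponds to the paper's `M_{s+1}`, with generator `y_{i+1}` realized as
`FreeGroup.of i`).  `M₁ = {e, y₁, y₁⁻¹}` and
`M_{s+1} = M_s ∪ M_s·y_{s+1}^{±1}·M_s ∪ M_s·y_{s+1}⁻¹·(M_s \ {e})·y_{s+1}·M_s`. -/
def Mset : ℕ → Set (FreeGroup ℕ)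
  | 0 => {1, FreeGroup.of 0, (FreeGroup.of 0)⁻¹}
  | s + 1 =>
      Mset s ∪ Mset s * {FreeGroup.of (s + 1), (FreeGroup.of (s + 1))⁻¹} * Mset s ∪
        Mset s * {(FreeGroup.of (s + 1))⁻¹} * (Mset s \ {1}) * {FreeGroup.of (s + 1)} *
          Mset s

lemma Mset_finite : ∀ s, (Mset s).Finite
  | 0 => by
      simp only [Mset]
      exact (Set.finite_singleton _).insert _ |>.insert _
  | s + 1 => by
      have h := Mset_finite s
      simp only [Mset]
      exact ((h.union ((h.mul ((Set.finite_singleton _).insert _)).mul h)).union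
        ((((h.mul (Set.finite_singleton _)).mul h.diff).mul
          (Set.finite_singleton _)).mul h))

lemma one_mem_Mset : ∀ s, (1 : FreeGroup ℕ) ∈ Mset s
  | 0 => by simp [Mset]
  | s + 1 => by
      simp only [Mset]
      exact Or.inl (Or.inl (one_mem_Mset s))

lemma ncard_mul_le' (s t : Set (FreeGroup ℕ)) : (s * t).ncard ≤ s.ncard * t.ncard :=
  Set.natCard_mul_le

lemma Mset_ncard_step (s : ℕ) :
    (Mset (s + 1)).ncard ≤ (Mset s).ncard + 2 * (Mset s).ncard ^ 2 +
      (Mset s).ncard ^ 2 * ((Mset s).ncard - 1) := by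
  set n := (Mset s).ncard with hn
  have hdiff : (Mset s \ {1}).ncard ≤ n - 1 := by
    rw [Set.ncard_diff_singleton_of_mem (one_mem_Mset s)]
  have hpair :
      ({FreeGroup.of (s + 1), (FreeGroup.of (s + 1))⁻¹} : Set (FreeGroup ℕ)).ncard ≤ 2 := by
    apply (Set.ncard_insert_le _ _).trans
    simp
  calc (Mset (s+1)).ncard
      ≤ (Mset s ∪ Mset s * {FreeGroup.of (s + 1), (FreeGroup.of (s + 1))⁻¹} * Mset s).ncard +
        (Mset s * {(FreeGroup.of (s + 1))⁻¹} * (Mset s \ {1}) * {FreeGroup.of (s + 1)} *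
          Mset s).ncard := by
        rw [show Mset (s+1) = _ from rfl]; exact Set.ncard_union_le _ _
    _ ≤ n + n * 2 * n + n * 1 * (n - 1) * 1 * n := by
        gcongr
        · exact (Set.ncard_union_le _ _).trans (by
            gcongr
            exact (ncard_mul_le' _ _).trans (by gcongr; exact (ncard_mul_le' _ _).trans (by gcongr)))
        · refine (ncard_mul_le' _ _).trans ?_
          gcongr
          refine (ncard_mul_le' _ _).trans ?_
          gcongr
          · refine (ncard_mul_le' _ _).trans ?_
            gcongr
            refine (ncard_mul_le' _ _).trans ?_
            gcongr
            all_goals simp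
          · simp
    _ ≤ n + 2 * n ^ 2 + n ^ 2 * (n - 1) := by ring_nf; omega

lemma Mset_ncard_zero : (Mset 0).ncard ≤ 3 := by
  simp only [Mset]
  exact (Set.ncard_insert_le _ _).trans (by
    have := Set.ncard_insert_le (FreeGroup.of 0) ({(FreeGroup.of 0)⁻¹} : Set (FreeGroup ℕ))
    simp only [Set.ncard_singleton] at this
    omega)

lemma Mset_ncard_one : (Mset 1).ncard ≤ 39 := by
  have h0 := Mset_ncard_zero
  have hstep := Mset_ncard_step 0
  have key : ∀ n : ℕ, n ≤ 3 → n + 2 * n ^ 2 + n ^ 2 * (n - 1) ≤ 39 := by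
    intro n hn
    interval_cases n <;> norm_num
  exact hstep.trans (key _ h0)

lemma Mset_arith (n N : ℕ) (hN : 3 ≤ N) (h : n + 1 ≤ N) :
    n + 2 * n ^ 2 + n ^ 2 * (n - 1) ≤ N ^ 3 - 1 := by
  rcases Nat.eq_zero_or_pos n with h0 | h0
  · subst h0
    simp
  · obtain ⟨m, rfl⟩ : ∃ m, n = m + 1 := ⟨n - 1, by omega⟩
    have hm : m + 2 ≤ N := by omega
    have h1 : (m + 1) + 2 * (m + 1) ^ 2 + (m + 1) ^ 2 * m + 1 ≤ (m + 2) ^ 3 := by nlinarith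
    have h2 : (m + 2) ^ 3 ≤ N ^ 3 := Nat.pow_le_pow_left hm 3
    simp only [Nat.add_sub_cancel]
    omega

lemma Mset_ncard_strong : ∀ k : ℕ, (Mset (k + 1)).ncard ≤ 3 ^ (4 * 3 ^ k) - 1
  | 0 => by
      have := Mset_ncard_one
      norm_num
      omega
  | k + 1 => by
      have ih := Mset_ncard_strong k
      have hstep := Mset_ncard_step (k + 1)
      set n := (Mset (k + 1)).ncard with hn
      set N := 3 ^ (4 * 3 ^ k) with hN
      have hN3 : 3 ≤ N := by
        calc (3:ℕ) = 3 ^ 1 := by norm_num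
          _ ≤ 3 ^ (4 * 3 ^ k) := Nat.pow_le_pow_right (by norm_num)
              (by have := Nat.one_le_pow k 3 (by norm_num); omega)
      have hpow : 3 ^ (4 * 3 ^ (k + 1)) = N ^ 3 := by
        rw [hN, ← pow_mul]
        ring_nf
      rw [hpow]
      have hnN : n ≤ N - 1 := ih
      have hn1 : n + 1 ≤ N := by omega
      have key := Mset_arith n N hN3 hn1
      omega

/-- `|M₂| ≤ 39`, and for every `d ≥ 2`,
`|M_d| ≤ 3 ^ (4·3^(d-2))` (equivalently `log₃ |M_d| ≤ 4·3^(d-2)`). -/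
theorem Mset_card_bounds :
    (Mset 1).ncard ≤ 39 ∧ ∀ d : ℕ, 2 ≤ d → (Mset (d - 1)).ncard ≤ 3 ^ (4 * 3 ^ (d - 2)) := by
  refine ⟨Mset_ncard_one, fun d hd => ?_⟩
  obtain ⟨k, rfl⟩ : ∃ k, d = k + 2 := ⟨d - 2, by omega⟩
  have := Mset_ncard_strong k
  simp only [Nat.add_sub_cancel]
  calc (Mset (k + 1)).ncard ≤ 3 ^ (4 * 3 ^ k) - 1 := this
    _ ≤ 3 ^ (4 * 3 ^ k) := Nat.sub_le _ _
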